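/- Fix δ > 0 and a positive integer n ≥ 2. Consider the complete graph on the 2n-element vertex set {x_1, …, x_n, y_1, …, y_n} with symmetric edge weights w given by w(x_i, x_j) = w(y_i, y_j) = e^{−δ|i−j|} and w(x_i, y_j) = e^{−δ|i−j| − 2δ}. Let S = {{x_i, x_{i+1}} : 1 ≤ i ≤ n−1} ∪ {{y_i, y_{i+1}} : 1 ≤ i ≤ n−1}. Then every maximum weight spanning tree of this weighted complete graph contains every edge of S; consequently, every maximum weight spanning tree consists of the path x_1, …, x_n, the path y_1, …, y_n, and exactly one additional edge of the form {x_i, y_j}. -/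

import Mathlib

open SimpleGraph

/-- The set of consecutive edges `{x_i, x_{i+1}}` and `{y_i, y_{i+1}}` on the vertex set
`{x_1, …, x_n} ⊔ {y_1, …, y_n}` (with `x`'s on the left, `y`'s on the right). -/
def pathEdges (n : ℕ) : Set (Sym2 (Fin n ⊕ Fin n)) :=
  {e | ∃ (i : Fin n) (h : (i : ℕ) + 1 < n),
      e = s(Sum.inl i, Sum.inl ⟨(i : ℕ) + 1, h⟩) ∨
      e = s(Sum.inr i, Sum.inr ⟨(i : ℕ) + 1, h⟩)}

open Sum

lemma pathEdges_step {n : ℕ} {u v : Fin n ⊕ Fin n} (h : s(u,v) ∈ pathEdges n) :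
    (∃ a b : Fin n, u = inl a ∧ v = inl b ∧ ((a:ℕ)+1 = b ∨ (b:ℕ)+1 = a)) ∨
    (∃ a b : Fin n, u = inr a ∧ v = inr b ∧ ((a:ℕ)+1 = b ∨ (b:ℕ)+1 = a)) := by
  obtain ⟨i, hi, hc | hc⟩ := h <;> rw [Sym2.eq_iff] at hc
  · left
    rcases hc with ⟨rfl, rfl⟩ | ⟨rfl, rfl⟩
    · exact ⟨i, _, rfl, rfl, Or.inl rfl⟩
    · exact ⟨_, i, rfl, rfl, Or.inr rfl⟩
  · right
    rcases hc with ⟨rfl, rfl⟩ | ⟨rfl, rfl⟩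
    · exact ⟨i, _, rfl, rfl, Or.inl rfl⟩
    · exact ⟨_, i, rfl, rfl, Or.inr rfl⟩

lemma crossL {n : ℕ} {T : SimpleGraph (Fin n ⊕ Fin n)} {u v : Fin n ⊕ Fin n}
    (p : T.Walk u v) :
    ∀ (a b : Fin n), (∀ e' ∈ p.edges, e' ∈ pathEdges n) → u = inl a → v = inl b →
    ∀ (i : ℕ) (hin : i + 1 < n), (a:ℕ) ≤ i → i + 1 ≤ (b:ℕ) →
      s(Sum.inl (⟨i, Nat.lt_of_succ_lt hin⟩ : Fin n), Sum.inl ⟨i+1, hin⟩) ∈ p.edges := by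
  induction p with
  | nil =>
    rintro a b _ rfl hv i hin ha hb
    obtain rfl : a = b := by simpa using hv
    omega
  | @cons x y z hadj q ih =>
    rintro a b hall rfl hv i hin ha hb
    have h1 : s(Sum.inl a, y) ∈ pathEdges n := hall _ (by simp)
    rcases pathEdges_step h1 with ⟨a', c, ha', rfl, hcase⟩ | ⟨a', c, ha', _, _⟩
    · have haa : a' = a := by simpa using ha'.symm
      subst haa
      by_cases hci : (c:ℕ) ≤ i
      · exact List.mem_cons_of_mem _
          (ih c b (fun e' he' => hall _ (List.mem_cons_of_mem _ he')) rfl hv i hin hci hb)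
      · have hc1 : (c:ℕ) = i + 1 := by omega
        have ha1 : (a':ℕ) = i := by omega
        have : (s(Sum.inl a', Sum.inl c) : Sym2 (Fin n ⊕ Fin n))
            = s(Sum.inl (⟨i, Nat.lt_of_succ_lt hin⟩ : Fin n), Sum.inl ⟨i+1, hin⟩) := by
          have e1 : a' = (⟨i, Nat.lt_of_succ_lt hin⟩ : Fin n) := Fin.ext ha1
          have e2 : c = (⟨i+1, hin⟩ : Fin n) := Fin.ext hc1
          rw [e1, e2]
        rw [Walk.edges_cons, this]
        exact List.mem_cons_self
    · exact absurd ha' (by simp)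

lemma crossR {n : ℕ} {T : SimpleGraph (Fin n ⊕ Fin n)} {u v : Fin n ⊕ Fin n}
    (p : T.Walk u v) :
    ∀ (a b : Fin n), (∀ e' ∈ p.edges, e' ∈ pathEdges n) → u = inr a → v = inr b →
    ∀ (i : ℕ) (hin : i + 1 < n), (a:ℕ) ≤ i → i + 1 ≤ (b:ℕ) →
      s(Sum.inr (⟨i, Nat.lt_of_succ_lt hin⟩ : Fin n), Sum.inr ⟨i+1, hin⟩) ∈ p.edges := by
  induction p with
  | nil =>
    rintro a b _ rfl hv i hin ha hb
    obtain rfl : a = b := by simpa using hv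
    omega
  | @cons x y z hadj q ih =>
    rintro a b hall rfl hv i hin ha hb
    have h1 : s(Sum.inr a, y) ∈ pathEdges n := hall _ (by simp)
    rcases pathEdges_step h1 with ⟨a', c, ha', _, _⟩ | ⟨a', c, ha', rfl, hcase⟩
    · exact absurd ha' (by simp)
    · have haa : a' = a := by simpa using ha'.symm
      subst haa
      by_cases hci : (c:ℕ) ≤ i
      · exact List.mem_cons_of_mem _
          (ih c b (fun e' he' => hall _ (List.mem_cons_of_mem _ he')) rfl hv i hin hci hb)
      · have hc1 : (c:ℕ) = i + 1 := by omega
        have ha1 : (a':ℕ) = i := by omega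
        have : (s(Sum.inr a', Sum.inr c) : Sym2 (Fin n ⊕ Fin n))
            = s(Sum.inr (⟨i, Nat.lt_of_succ_lt hin⟩ : Fin n), Sum.inr ⟨i+1, hin⟩) := by
          have e1 : a' = (⟨i, Nat.lt_of_succ_lt hin⟩ : Fin n) := Fin.ext ha1
          have e2 : c = (⟨i+1, hin⟩ : Fin n) := Fin.ext hc1
          rw [e1, e2]
        rw [Walk.edges_cons, this]
        exact List.mem_cons_self
section Weights
variable {n : ℕ} {δ : ℝ} {w : (Fin n ⊕ Fin n) → (Fin n ⊕ Fin n) → ℝ}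

lemma weight_path (hs : ∀ u v, w u v = w v u)
    (hxx : ∀ i j : Fin n, w (Sum.inl i) (Sum.inl j) =
      Real.exp (-δ * |((i : ℕ) : ℝ) - ((j : ℕ) : ℝ)|))
    (hyy : ∀ i j : Fin n, w (Sum.inr i) (Sum.inr j) =
      Real.exp (-δ * |((i : ℕ) : ℝ) - ((j : ℕ) : ℝ)|))
    {e : Sym2 (Fin n ⊕ Fin n)} (he : e ∈ pathEdges n) :
    Sym2.lift ⟨w, hs⟩ e = Real.exp (-δ) := by
  have key : ∀ (i : ℕ) (hi : i + 1 < n),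
      -δ * |((i:ℕ) : ℝ) - (((⟨i+1, hi⟩ : Fin n) : ℕ) : ℝ)| = -δ := by
    intro i hi
    have h1 : (((⟨i+1, hi⟩ : Fin n) : ℕ) : ℝ) = (i : ℝ) + 1 := by push_cast; ring
    rw [h1, abs_sub_comm, show ((i:ℝ) + 1 - i) = 1 by ring, abs_one, mul_one]
  obtain ⟨i, hi, rfl | rfl⟩ := he
  · rw [Sym2.lift_mk]
    show w _ _ = _
    rw [hxx, key (i:ℕ) hi]
  · rw [Sym2.lift_mk]
    show w _ _ = _
    rw [hyy, key (i:ℕ) hi]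

lemma gap_two {i j : Fin n} (hne : i ≠ j)
    (h : (s(Sum.inl i, Sum.inl j) : Sym2 (Fin n ⊕ Fin n)) ∉ pathEdges n ∨
         (s(Sum.inr i, Sum.inr j) : Sym2 (Fin n ⊕ Fin n)) ∉ pathEdges n) :
    (i : ℕ) + 2 ≤ j ∨ (j : ℕ) + 2 ≤ i := by
  have hne' : (i : ℕ) ≠ j := fun hc => hne (Fin.ext hc)
  have h1 : ¬ ((i:ℕ) + 1 = j) := by
    intro hc
    have hlt : (i:ℕ) + 1 < n := hc ▸ j.isLt
    have hj : j = (⟨(i:ℕ)+1, hlt⟩ : Fin n) := Fin.ext hc.symm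
    have : ∀ m ∈ pathEdges n, True := fun _ _ => trivial
    rcases h with h | h <;> exact h ⟨i, hlt, by rw [hj]; simp⟩
  have h2 : ¬ ((j:ℕ) + 1 = i) := by
    intro hc
    have hlt : (j:ℕ) + 1 < n := hc ▸ i.isLt
    have hi' : i = (⟨(j:ℕ)+1, hlt⟩ : Fin n) := Fin.ext hc.symm
    rcases h with h | h <;>
      exact h ⟨j, hlt, by rw [hi', Sym2.eq_swap]; simp⟩
  omega

lemma exp_gap_le {δ : ℝ} (hδ : 0 < δ) {i j : Fin n}
    (hgap : (i : ℕ) + 2 ≤ j ∨ (j : ℕ) + 2 ≤ i) :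
    Real.exp (-δ * |((i : ℕ) : ℝ) - ((j : ℕ) : ℝ)|) ≤ Real.exp (-2 * δ) := by
  have habs : (2:ℝ) ≤ |((i : ℕ) : ℝ) - ((j : ℕ) : ℝ)| := by
    rcases hgap with h | h
    · have : ((i:ℕ):ℝ) + 2 ≤ ((j:ℕ):ℝ) := by exact_mod_cast h
      rw [abs_sub_comm, abs_of_nonneg (by linarith)]; linarith
    · have : ((j:ℕ):ℝ) + 2 ≤ ((i:ℕ):ℝ) := by exact_mod_cast h
      rw [abs_of_nonneg (by linarith)]; linarith
  apply Real.exp_le_exp.2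
  nlinarith

lemma weight_nonpath (hδ : 0 < δ) (hs : ∀ u v, w u v = w v u)
    (hxx : ∀ i j : Fin n, w (Sum.inl i) (Sum.inl j) =
      Real.exp (-δ * |((i : ℕ) : ℝ) - ((j : ℕ) : ℝ)|))
    (hyy : ∀ i j : Fin n, w (Sum.inr i) (Sum.inr j) =
      Real.exp (-δ * |((i : ℕ) : ℝ) - ((j : ℕ) : ℝ)|))
    (hxy : ∀ i j : Fin n, w (Sum.inl i) (Sum.inr j) =
      Real.exp (-δ * |((i : ℕ) : ℝ) - ((j : ℕ) : ℝ)| - 2 * δ))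
    {u v : Fin n ⊕ Fin n} (hne : u ≠ v) (hnp : (s(u,v) : Sym2 (Fin n ⊕ Fin n)) ∉ pathEdges n) :
    Sym2.lift ⟨w, hs⟩ s(u,v) ≤ Real.exp (-2 * δ) := by
  have hcross : ∀ i j : Fin n,
      Real.exp (-δ * |((i : ℕ) : ℝ) - ((j : ℕ) : ℝ)| - 2 * δ) ≤ Real.exp (-2 * δ) := by
    intro i j
    apply Real.exp_le_exp.2
    have : (0:ℝ) ≤ |((i : ℕ) : ℝ) - ((j : ℕ) : ℝ)| := abs_nonneg _
    nlinarith
  rw [Sym2.lift_mk]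
  show w u v ≤ _
  rcases u with i | i <;> rcases v with j | j
  · have hne' : i ≠ j := fun h => hne (by rw [h])
    rw [hxx]
    exact exp_gap_le hδ (gap_two hne' (Or.inl hnp))
  · rw [hxy]; exact hcross i j
  · rw [hs, hxy]; exact hcross j i
  · have hne' : i ≠ j := fun h => hne (by rw [h])
    rw [hyy]
    exact exp_gap_le hδ (gap_two hne' (Or.inr hnp))

end Weights
/-- The total weight of the edges of `G`, for a weight function `f` on unordered pairs. -/
noncomputable def edgeWeightSum {V : Type*} [Fintype V] (G : SimpleGraph V)
    (f : Sym2 V → ℝ) : ℝ :=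
  ∑ e ∈ G.edgeSet.toFinite.toFinset, f e

/-- **Structure of maximum weight spanning trees for the counterexample weights.** Consider the
complete graph on `{x_1, …, x_n, y_1, …, y_n}` with weights `w(x_i,x_j) = w(y_i,y_j) =
e^{−δ|i−j|}` and `w(x_i,y_j) = e^{−δ|i−j|−2δ}`. Every maximum weight spanning tree contains all
consecutive edges `{x_i,x_{i+1}}` and `{y_i,y_{i+1}}`, and consequently consists of the path
`x_1, …, x_n`, the path `y_1, …, y_n`, and exactly one additional edge `{x_{i₀}, y_{j₀}}`. -/
theorem max_weight_spanning_tree_structure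
    (δ : ℝ) (hδ : 0 < δ) (n : ℕ) (hn : 2 ≤ n)
    (w : (Fin n ⊕ Fin n) → (Fin n ⊕ Fin n) → ℝ)
    (hsymm : ∀ u v, w u v = w v u)
    (hxx : ∀ i j : Fin n, w (Sum.inl i) (Sum.inl j) =
      Real.exp (-δ * |((i : ℕ) : ℝ) - ((j : ℕ) : ℝ)|))
    (hyy : ∀ i j : Fin n, w (Sum.inr i) (Sum.inr j) =
      Real.exp (-δ * |((i : ℕ) : ℝ) - ((j : ℕ) : ℝ)|))
    (hxy : ∀ i j : Fin n, w (Sum.inl i) (Sum.inr j) =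
      Real.exp (-δ * |((i : ℕ) : ℝ) - ((j : ℕ) : ℝ)| - 2 * δ))
    (T : SimpleGraph (Fin n ⊕ Fin n)) (hT : T.IsTree)
    (hmax : ∀ T' : SimpleGraph (Fin n ⊕ Fin n), T'.IsTree →
      edgeWeightSum T' (Sym2.lift ⟨w, hsymm⟩) ≤ edgeWeightSum T (Sym2.lift ⟨w, hsymm⟩)) :
    pathEdges n ⊆ T.edgeSet ∧
    ∃ i₀ j₀ : Fin n, T.edgeSet = pathEdges n ∪ {s(Sum.inl i₀, Sum.inr j₀)} := by
  classical
  set f : Sym2 (Fin n ⊕ Fin n) → ℝ := Sym2.lift ⟨w, hsymm⟩ with hf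
  have hV : Nonempty (Fin n ⊕ Fin n) := ⟨inl ⟨0, by omega⟩⟩
  -- Part 1
  have part1 : pathEdges n ⊆ T.edgeSet := by
    intro e he
    by_contra heT
    obtain ⟨x, y, hxyne, hexy, hforce⟩ :
        ∃ x y : Fin n ⊕ Fin n, x ≠ y ∧ e = s(x, y) ∧
          ∀ (p : T.Walk x y), (∀ e' ∈ p.edges, e' ∈ pathEdges n) → e ∈ p.edges := by
      obtain ⟨i, hi, hc | hc⟩ := he
      · refine ⟨inl i, inl ⟨(i:ℕ)+1, hi⟩, by simp [Fin.ext_iff], hc, ?_⟩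
        intro p hall
        have h1 := crossL p i ⟨(i:ℕ)+1, hi⟩ hall rfl rfl (i:ℕ) hi le_rfl le_rfl
        rw [hc]
        exact h1
      · refine ⟨inr i, inr ⟨(i:ℕ)+1, hi⟩, by simp [Fin.ext_iff], hc, ?_⟩
        intro p hall
        have h1 := crossR p i ⟨(i:ℕ)+1, hi⟩ hall rfl rfl (i:ℕ) hi le_rfl le_rfl
        rw [hc]
        exact h1
    subst hexy
    obtain ⟨q0⟩ := hT.isConnected.preconnected x y
    set p0 := q0.toPath with hp0
    have hp0path : (p0 : T.Walk x y).IsPath := p0.2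
    have hp0T : ∀ e' ∈ (p0 : T.Walk x y).edges, e' ∈ T.edgeSet :=
      fun e' h => Walk.edges_subset_edgeSet _ h
    have hex : ∃ f' ∈ (p0 : T.Walk x y).edges, f' ∉ pathEdges n := by
      by_contra hno
      push_neg at hno
      exact heT (hp0T _ (hforce _ hno))
    obtain ⟨f', hf'mem, hf'np⟩ := hex
    have hf'T : f' ∈ T.edgeSet := hp0T _ hf'mem
    obtain ⟨c, d, rfl⟩ : ∃ c d, f' = s(c, d) := by
      induction f' using Sym2.ind with | _ c d => exact ⟨c, d, rfl⟩
    have hcd : c ≠ d := ((mem_edgeSet T).1 hf'T).ne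
    have hef' : (s(x,y) : Sym2 (Fin n ⊕ Fin n)) ≠ s(c,d) := fun hq => heT (hq ▸ hf'T)
    have hfe : f s(x,y) = Real.exp (-δ) := weight_path hsymm hxx hyy he
    have hff' : f s(c,d) ≤ Real.exp (-2*δ) :=
      weight_nonpath hδ hsymm hxx hyy hxy hcd hf'np
    set G1 : SimpleGraph (Fin n ⊕ Fin n) := T ⊔ fromEdgeSet {s(x,y)} with hG1
    have hTle : T ≤ G1 := le_sup_left
    have hsubE : T.edgeSet ⊆ G1.edgeSet := edgeSet_mono hTle
    have hsub : ∀ e' ∈ (p0 : T.Walk x y).edges, e' ∈ G1.edgeSet :=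
      fun e' h => hsubE (hp0T _ h)
    set p1 := (p0 : T.Walk x y).transfer G1 hsub with hp1def
    have hp1 : p1.IsPath := hp0path.transfer hsub
    have hedges1 : p1.edges = (p0 : T.Walk x y).edges := Walk.edges_transfer _ _
    have hadj : G1.Adj x y := by
      rw [hG1, sup_adj, fromEdgeSet_adj]
      exact Or.inr ⟨rfl, hxyne⟩
    have hnotin : (s(y, x) : Sym2 (Fin n ⊕ Fin n)) ∉ p1.edges := by
      rw [hedges1, Sym2.eq_swap]
      exact fun hh => heT (hp0T _ hh)
    have hcyc : (Walk.cons hadj.symm p1).IsCycle :=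
      Path.cons_isCycle ⟨p1, hp1⟩ hadj.symm hnotin
    have hf'cyc : (s(c,d) : Sym2 (Fin n ⊕ Fin n)) ∈ (Walk.cons hadj.symm p1).edges := by
      rw [Walk.edges_cons]
      exact List.mem_cons_of_mem _ (hedges1 ▸ hf'mem)
    have hreach0 : (G1 \ fromEdgeSet {s(c,d)}).Reachable c d :=
      (adj_and_reachable_delete_edges_iff_exists_cycle.2 ⟨y, _, hcyc, hf'cyc⟩).2
    set T' := G1.deleteEdges {s(c,d)} with hT'def
    have hreach' : T'.Reachable c d := hreach0
    have hediag : ¬ (s(x,y) : Sym2 (Fin n ⊕ Fin n)).IsDiag := by simp [hxyne]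
    have hT'edge : T'.edgeSet = insert (s(x,y)) (T.edgeSet \ {s(c,d)}) := by
      rw [hT'def, edgeSet_deleteEdges, hG1, edgeSet_sup, edgeSet_fromEdgeSet]
      ext a
      simp only [Set.mem_diff, Set.mem_union, Set.mem_singleton_iff, Set.mem_insert_iff,
        Set.mem_setOf_eq]
      constructor
      · rintro ⟨hA | ⟨hA, _⟩, hB⟩
        · exact Or.inr ⟨hA, hB⟩
        · exact Or.inl hA
      · rintro (rfl | ⟨hA, hB⟩)
        · exact ⟨Or.inr ⟨rfl, hediag⟩, hef'⟩
        · exact ⟨Or.inl hA, hB⟩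
    have hstep : ∀ {a b : Fin n ⊕ Fin n}, T.Adj a b → T'.Reachable a b := by
      intro a b hab
      by_cases hq : (s(a,b) : Sym2 (Fin n ⊕ Fin n)) = s(c,d)
      · rw [Sym2.eq_iff] at hq
        rcases hq with ⟨rfl, rfl⟩ | ⟨rfl, rfl⟩
        · exact hreach'
        · exact hreach'.symm
      · apply Adj.reachable
        rw [← mem_edgeSet, hT'edge]
        exact Set.mem_insert_iff.2 (Or.inr ⟨(mem_edgeSet T).2 hab, hq⟩)
    have hwalkreach : ∀ {a b : Fin n ⊕ Fin n}, T.Walk a b → T'.Reachable a b := by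
      intro a b p
      induction p with
      | nil => exact Reachable.refl _
      | cons h q ih => exact (hstep h).trans ih
    have hT'conn : T'.Connected :=
      (connected_iff T').mpr ⟨fun a b => hwalkreach (hT.isConnected.preconnected a b).some, hV⟩
    have hT'ac : T'.IsAcyclic := by
      intro z cyc hcyc2
      have hedgesT' : ∀ e' ∈ cyc.edges, e' ∈ T'.edgeSet :=
        fun _ h => Walk.edges_subset_edgeSet _ h
      by_cases hecyc : (s(x,y) : Sym2 (Fin n ⊕ Fin n)) ∈ cyc.edges
      · have hr : (T' \ fromEdgeSet {s(x,y)}).Reachable x y :=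
          (adj_and_reachable_delete_edges_iff_exists_cycle.2 ⟨z, cyc, hcyc2, hecyc⟩).2
        obtain ⟨q⟩ := hr
        have hqT2 : ∀ e' ∈ q.edges, e' ∈ T.edgeSet ∧ e' ≠ s(c,d) := by
          intro e' h
          have h1 : e' ∈ (T'.deleteEdges {s(x,y)}).edgeSet := Walk.edges_subset_edgeSet _ h
          rw [edgeSet_deleteEdges] at h1
          obtain ⟨h2, h3⟩ := h1
          rw [hT'edge] at h2
          rcases h2 with rfl | h4
          · exact absurd rfl h3
          · exact ⟨h4.1, h4.2⟩
        set q2 := q.transfer T (fun e' h => (hqT2 e' h).1) with hq2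
        have h5 : (q2.toPath : T.Walk x y) = (p0 : T.Walk x y) :=
          (hT.existsUnique_path x y).unique q2.toPath.2 p0.2
        have h6 : (s(c,d) : Sym2 (Fin n ⊕ Fin n)) ∉ (q2.toPath : T.Walk x y).edges := by
          intro hh
          have h7 := Walk.edges_toPath_subset q2 hh
          rw [hq2, Walk.edges_transfer] at h7
          exact (hqT2 _ h7).2 rfl
        rw [h5] at h6
        exact h6 hf'mem
      · have hcycT : ∀ e' ∈ cyc.edges, e' ∈ T.edgeSet := by
          intro e' h
          have h1 := hedgesT' e' h
          rw [hT'edge] at h1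
          rcases h1 with rfl | h2
          · exact absurd h hecyc
          · exact h2.1
        exact hT.IsAcyclic (cyc.transfer T hcycT) (hcyc2.transfer hcycT)
    have hT'tree : T'.IsTree := ⟨hT'conn, hT'ac⟩
    have hcmp := hmax T' hT'tree
    set E := T.edgeSet.toFinite.toFinset with hE
    have hE'eq : T'.edgeSet.toFinite.toFinset = insert (s(x,y)) (E.erase (s(c,d))) := by
      ext a
      simp only [Set.Finite.mem_toFinset, hT'edge, Finset.mem_insert, Finset.mem_erase,
        Set.mem_insert_iff, Set.mem_diff, Set.mem_singleton_iff, hE]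
      tauto
    have heE : (s(x,y) : Sym2 (Fin n ⊕ Fin n)) ∉ E.erase (s(c,d)) := by
      simp only [Finset.mem_erase, hE, Set.Finite.mem_toFinset]
      exact fun hh => heT hh.2
    have hf'E : (s(c,d) : Sym2 (Fin n ⊕ Fin n)) ∈ E := by
      simp only [hE, Set.Finite.mem_toFinset]; exact hf'T
    have hsum : edgeWeightSum T' f = f (s(x,y)) + (edgeWeightSum T f - f (s(c,d))) := by
      rw [edgeWeightSum, edgeWeightSum, hE'eq, Finset.sum_insert heE, ← hE]
      have := Finset.sum_erase_add E f hf'E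
      linarith
    have hexp : Real.exp (-2*δ) < Real.exp (-δ) := Real.exp_lt_exp.2 (by linarith)
    rw [hsum, hfe] at hcmp
    linarith
  refine ⟨part1, ?_⟩
  -- Part 2
  haveI : Fintype ↥(T.edgeSet) := T.edgeSet.toFinite.fintype
  set E := T.edgeSet.toFinite.toFinset with hE
  have hEcard : E.card = 2*n - 1 := by
    have h1 : E = T.edgeFinset := by
      ext a; rw [Set.Finite.mem_toFinset, mem_edgeFinset]
    have h2 := hT.card_edgeFinset
    have h3 : Fintype.card (Fin n ⊕ Fin n) = n + n := by simp
    rw [h1]; omega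
  set P := (pathEdges n).toFinite.toFinset with hP
  have hn1 : ∀ i : Fin (n-1), (i:ℕ) + 1 < n := fun i => by have := i.isLt; omega
  have hn0 : ∀ i : Fin (n-1), (i:ℕ) < n := fun i => by have := i.isLt; omega
  set κ : Fin (n-1) ⊕ Fin (n-1) → Sym2 (Fin n ⊕ Fin n) := fun s =>
    Sum.rec (fun i => s(Sum.inl ⟨(i:ℕ), hn0 i⟩, Sum.inl ⟨(i:ℕ)+1, hn1 i⟩))
      (fun i => s(Sum.inr ⟨(i:ℕ), hn0 i⟩, Sum.inr ⟨(i:ℕ)+1, hn1 i⟩)) s with hκ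
  have hκinj : Function.Injective κ := by
    rintro (i|i) (j|j) h <;>
      simp only [hκ, Sym2.eq_iff, Sum.inl.injEq, Sum.inr.injEq, Fin.mk.injEq] at h
    · rcases h with ⟨h1, _⟩ | ⟨h1, h2⟩
      · exact congrArg Sum.inl (Fin.ext h1)
      · omega
    · simp at h
    · simp at h
    · rcases h with ⟨h1, _⟩ | ⟨h1, h2⟩
      · exact congrArg Sum.inr (Fin.ext h1)
      · omega
  have hPimg : P = Finset.image κ Finset.univ := by
    ext a
    simp only [hP, Set.Finite.mem_toFinset, Finset.mem_image, Finset.mem_univ, true_and]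
    constructor
    · rintro ⟨i, hi, rfl | rfl⟩
      · refine ⟨inl ⟨(i:ℕ), by omega⟩, ?_⟩
        simp [hκ]
      · refine ⟨inr ⟨(i:ℕ), by omega⟩, ?_⟩
        simp [hκ]
    · rintro ⟨(i|i), rfl⟩
      · exact ⟨⟨(i:ℕ), hn0 i⟩, hn1 i, Or.inl rfl⟩
      · exact ⟨⟨(i:ℕ), hn0 i⟩, hn1 i, Or.inr rfl⟩
  have hPcard : P.card = 2*n - 2 := by
    rw [hPimg, Finset.card_image_of_injective _ hκinj]
    simp only [Finset.card_univ, Fintype.card_sum, Fintype.card_fin]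
    omega
  have hPE : P ⊆ E := by
    intro a ha
    simp only [hE, Set.Finite.mem_toFinset]
    exact part1 (by simpa [hP, Set.Finite.mem_toFinset] using ha)
  have hsd : (E \ P).card = 1 := by
    rw [Finset.card_sdiff, Finset.inter_eq_left.2 hPE]; omega
  obtain ⟨g, hg⟩ := Finset.card_eq_one.1 hsd
  have hgEP : g ∈ E ∧ g ∉ P := Finset.mem_sdiff.1 (hg ▸ Finset.mem_singleton_self g)
  have hgT : g ∈ T.edgeSet := by simpa [hE, Set.Finite.mem_toFinset] using hgEP.1
  have hgP : g ∉ pathEdges n := fun hh => hgEP.2 (by simpa [hP, Set.Finite.mem_toFinset] using hh)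
  have hEdecomp : T.edgeSet = pathEdges n ∪ {g} := by
    have h1 : P ∪ (E \ P) = E := Finset.union_sdiff_of_subset hPE
    rw [hg] at h1
    ext a
    constructor
    · intro ha
      have : a ∈ P ∪ ({g} : Finset _) := by
        rw [h1]; simpa [hE, Set.Finite.mem_toFinset] using ha
      rcases Finset.mem_union.1 this with h | h
      · exact Or.inl (by simpa [hP, Set.Finite.mem_toFinset] using h)
      · exact Or.inr (by simpa using h)
    · rintro (ha | ha)
      · exact part1 ha
      · rw [Set.mem_singleton_iff] at ha
        exact ha ▸ hgT
  obtain ⟨c0, d0, rfl⟩ : ∃ a b, g = s(a, b) := by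
    induction g using Sym2.ind with | _ a b => exact ⟨a, b, rfl⟩
  have sameSideFalse : ∀ (hss : ∀ a b : Fin n ⊕ Fin n, T.Adj a b → a.isLeft = b.isLeft), False := by
    intro hss
    have hwalk : ∀ {a b : Fin n ⊕ Fin n} (_ : T.Walk a b), a.isLeft = b.isLeft := by
      intro a b p
      induction p with
      | nil => rfl
      | cons h q ih => exact (hss _ _ h).trans ih
    have h0 : (0:ℕ) < n := by omega
    obtain ⟨pw⟩ := hT.isConnected.preconnected (inl ⟨0, h0⟩) (inr ⟨0, h0⟩)
    simpa using hwalk pw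
  have hsameside : ∀ a b : Fin n ⊕ Fin n,
      (s(a,b) : Sym2 (Fin n ⊕ Fin n)) = s(c0, d0) → c0.isLeft = d0.isLeft →
      T.Adj a b → a.isLeft = b.isLeft := by
    intro a b hab hcd0 _
    rw [Sym2.eq_iff] at hab
    rcases hab with ⟨rfl, rfl⟩ | ⟨rfl, rfl⟩
    · exact hcd0
    · exact hcd0.symm
  have hgeneric : c0.isLeft = d0.isLeft → False := by
    intro hcd0
    apply sameSideFalse
    intro a b hab
    have hmem : (s(a,b) : Sym2 (Fin n ⊕ Fin n)) ∈ T.edgeSet := (mem_edgeSet T).2 hab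
    rw [hEdecomp] at hmem
    rcases hmem with hp | hgg
    · rcases pathEdges_step hp with ⟨a', b', rfl, rfl, _⟩ | ⟨a', b', rfl, rfl, _⟩ <;> rfl
    · exact hsameside a b (by simpa using hgg) hcd0 hab
  rcases c0 with i | i <;> rcases d0 with j | j
  · exact absurd rfl hgeneric
  · exact ⟨i, j, hEdecomp⟩
  · refine ⟨j, i, ?_⟩
    rw [hEdecomp]
    congr 1
    exact congrArg _ (Sym2.eq_swap)
  · exact absurd rfl hgeneric
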